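/- Let x ∈ ℝ^N be K-sparse with support T, and y = Φx + e where Φ satisfies the RIP with constant δ_{3K} < 1. For any index set T̂ with |T̂| ≤ K for which Φ_{T̂} has full column rank, define x̂ by x̂_{T̂} = Φ_{T̂}^† y and x̂ = 0 off T̂. Then ‖x − x̂‖₂ ≤ (1/(1−δ_{3K})) ‖x_{T−T̂}‖₂ + ((1+δ_{3K})/(1−δ_{3K})) ‖e‖₂. -/

import Mathlib

open scoped BigOperators

/-- Squared-sum Euclidean norm of a finite vector. -/
noncomputable def l2norm {ι : Type*} [Fintype ι] (v : ι → ℝ) : ℝ :=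
  Real.sqrt (∑ i, v i ^ 2)

/-- The ℓ₁ norm of a finite vector. -/
noncomputable def l1norm {ι : Type*} [Fintype ι] (v : ι → ℝ) : ℝ :=
  ∑ i, |v i|

/-- `Φ_I q`: the product of the column submatrix `Φ_I` with a coefficient vector `q`. -/
noncomputable def colMul {m N : ℕ} (Φ : Matrix (Fin m) (Fin N) ℝ) (I : Finset (Fin N))
    (q : I → ℝ) : Fin m → ℝ :=
  fun r => ∑ i : I, Φ r i.1 * q i

/-- `Φ_I^* y`: the transpose of the column submatrix applied to `y`. -/
noncomputable def colTMul {m N : ℕ} (Φ : Matrix (Fin m) (Fin N) ℝ) (I : Finset (Fin N))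
    (y : Fin m → ℝ) : I → ℝ :=
  fun i => ∑ r, Φ r i.1 * y r

/-- The Gram matrix `Φ_I^* Φ_I`. -/
noncomputable def gram {m N : ℕ} (Φ : Matrix (Fin m) (Fin N) ℝ) (I : Finset (Fin N)) :
    Matrix I I ℝ :=
  fun i j => ∑ r, Φ r i.1 * Φ r j.1

/-- `Φ` satisfies the restricted isometry property at sparsity `K` with parameter `δ`. -/
def IsRIP {m N : ℕ} (Φ : Matrix (Fin m) (Fin N) ℝ) (K : ℕ) (δ : ℝ) : Prop :=
  ∀ I : Finset (Fin N), I.card ≤ K → ∀ q : I → ℝ,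
    (1 - δ) * ∑ i, q i ^ 2 ≤ ∑ r, (colMul Φ I q r) ^ 2 ∧
      ∑ r, (colMul Φ I q r) ^ 2 ≤ (1 + δ) * ∑ i, q i ^ 2

/-- The RIP constant `δ_K`: the infimum of all admissible RIP parameters. -/
noncomputable def ripConst {m N : ℕ} (Φ : Matrix (Fin m) (Fin N) ℝ) (K : ℕ) : ℝ :=
  sInf {δ : ℝ | 0 ≤ δ ∧ IsRIP Φ K δ}

/-- Projection coefficients `(Φ_I^* Φ_I)⁻¹ Φ_I^* y`. -/
noncomputable def projCoeff {m N : ℕ} (Φ : Matrix (Fin m) (Fin N) ℝ) (I : Finset (Fin N))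
    (y : Fin m → ℝ) : I → ℝ :=
  (gram Φ I)⁻¹.mulVec (colTMul Φ I y)

/-- Orthogonal projection of `y` onto the column span of `Φ_I`. -/
noncomputable def projVec {m N : ℕ} (Φ : Matrix (Fin m) (Fin N) ℝ) (I : Finset (Fin N))
    (y : Fin m → ℝ) : Fin m → ℝ :=
  colMul Φ I (projCoeff Φ I y)

section aux
variable {m N : ℕ} (Φ : Matrix (Fin m) (Fin N) ℝ)

noncomputable def extv (I : Finset (Fin N)) (q : I → ℝ) : Fin N → ℝ :=
  fun j => if h : j ∈ I then q ⟨j, h⟩ else 0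

lemma extv_not_mem {I : Finset (Fin N)} (q : I → ℝ) {j : Fin N} (h : j ∉ I) :
    extv I q j = 0 := dif_neg h

lemma sum_I_eq_sum_extv {I : Finset (Fin N)} (q : I → ℝ) (f : Fin N → ℝ) :
    ∑ i : I, f i.1 * q i = ∑ j, f j * extv I q j := by
  rw [← Finset.sum_subset (Finset.subset_univ I)
    (fun j _ hj => by rw [extv_not_mem q hj, mul_zero])]
  rw [← Finset.sum_coe_sort I (fun j => f j * extv I q j)]
  refine Finset.sum_congr rfl fun i _ => ?_
  simp [extv, dif_pos i.2]

lemma colMul_eq_mulVec {I : Finset (Fin N)} (q : I → ℝ) :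
    colMul Φ I q = Φ.mulVec (extv I q) := by
  funext r
  rw [colMul, Matrix.mulVec, sum_I_eq_sum_extv]
  rfl

lemma sumsq_extv {I : Finset (Fin N)} (q : I → ℝ) :
    ∑ i : I, q i ^ 2 = ∑ j, extv I q j ^ 2 := by
  have := sum_I_eq_sum_extv q (extv I q)
  have h2 : ∑ i : I, extv I q i.1 * q i = ∑ i : I, q i ^ 2 := by
    refine Finset.sum_congr rfl fun i _ => ?_
    simp [extv, dif_pos i.2, sq]
  rw [← h2, this]
  exact Finset.sum_congr rfl fun j _ => (sq (extv I q j)) ▸ rfl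

lemma rip_vec {K : ℕ} {δ : ℝ} (hR : IsRIP Φ K δ) {I : Finset (Fin N)} (hI : I.card ≤ K)
    {v : Fin N → ℝ} (hv : ∀ j, j ∉ I → v j = 0) :
    (1 - δ) * ∑ j, v j ^ 2 ≤ ∑ r, (Φ.mulVec v r) ^ 2 ∧
      ∑ r, (Φ.mulVec v r) ^ 2 ≤ (1 + δ) * ∑ j, v j ^ 2 := by
  set q : I → ℝ := fun i => v i.1 with hq
  have hev : extv I q = v := by
    funext j
    by_cases h : j ∈ I
    · simp [extv, dif_pos h, hq]
    · simp [extv, dif_neg h, hv j h]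
  have := hR I hI q
  rwa [colMul_eq_mulVec, sumsq_extv, hev] at this

lemma isRIP_mono {K : ℕ} {δ δ' : ℝ} (h : IsRIP Φ K δ) (hle : δ ≤ δ') : IsRIP Φ K δ' := by
  intro I hI q
  obtain ⟨h1, h2⟩ := h I hI q
  have hA : (0:ℝ) ≤ ∑ i : I, q i ^ 2 := Finset.sum_nonneg fun i _ => sq_nonneg _
  constructor
  · nlinarith
  · nlinarith

lemma isRIP_big (K : ℕ) : IsRIP Φ K (1 + ∑ r, ∑ j, (Φ r j) ^ 2) := by
  intro I hI q
  set F : ℝ := ∑ r, ∑ j, (Φ r j) ^ 2 with hF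
  have hA : (0:ℝ) ≤ ∑ i : I, q i ^ 2 := Finset.sum_nonneg fun i _ => sq_nonneg _
  have hS : (0:ℝ) ≤ ∑ r, (colMul Φ I q r) ^ 2 := Finset.sum_nonneg fun r _ => sq_nonneg _
  have hF0 : (0:ℝ) ≤ F := Finset.sum_nonneg fun r _ => Finset.sum_nonneg fun j _ => sq_nonneg _
  constructor
  · nlinarith
  · have key : ∀ r, (colMul Φ I q r) ^ 2 ≤ (∑ j, (Φ r j) ^ 2) * ∑ i : I, q i ^ 2 := by
      intro r
      have cs2 : (∑ i : I, Φ r i.1 * q i) ^ 2 ≤ (∑ i : I, (Φ r i.1) ^ 2) * ∑ i : I, q i ^ 2 :=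
        Finset.sum_mul_sq_le_sq_mul_sq Finset.univ (fun i : I => Φ r i.1) q
      have hsub : ∑ i : I, (Φ r i.1) ^ 2 ≤ ∑ j, (Φ r j) ^ 2 := by
        rw [Finset.sum_coe_sort I (fun j => (Φ r j) ^ 2)]
        exact Finset.sum_le_sum_of_subset_of_nonneg (Finset.subset_univ I)
          (fun j _ _ => sq_nonneg _)
      calc (colMul Φ I q r) ^ 2 = (∑ i : I, Φ r i.1 * q i) ^ 2 := rfl
        _ ≤ (∑ i : I, (Φ r i.1) ^ 2) * ∑ i : I, q i ^ 2 := cs2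
        _ ≤ (∑ j, (Φ r j) ^ 2) * ∑ i : I, q i ^ 2 := by
            exact mul_le_mul_of_nonneg_right hsub hA
    calc ∑ r, (colMul Φ I q r) ^ 2 ≤ ∑ r, (∑ j, (Φ r j) ^ 2) * ∑ i : I, q i ^ 2 :=
          Finset.sum_le_sum fun r _ => key r
      _ = F * ∑ i : I, q i ^ 2 := by rw [← Finset.sum_mul]
      _ ≤ (1 + (1 + F)) * ∑ i : I, q i ^ 2 := by nlinarith

lemma ripSet_nonempty (K : ℕ) : {δ : ℝ | 0 ≤ δ ∧ IsRIP Φ K δ}.Nonempty := by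
  refine ⟨1 + ∑ r, ∑ j, (Φ r j) ^ 2, ?_, isRIP_big Φ K⟩
  positivity

lemma ripConst_nonneg (K : ℕ) : 0 ≤ ripConst Φ K :=
  Real.sInf_nonneg (fun x hx => hx.1)

lemma isRIP_ripConst (K : ℕ) : IsRIP Φ K (ripConst Φ K) := by
  intro I hI q
  set A := ∑ i : I, q i ^ 2 with hA
  set S := ∑ r, (colMul Φ I q r) ^ 2 with hS
  have hA0 : (0:ℝ) ≤ A := Finset.sum_nonneg fun i _ => sq_nonneg _
  have hS0 : (0:ℝ) ≤ S := Finset.sum_nonneg fun r _ => sq_nonneg _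
  have hne := ripSet_nonempty Φ K
  have key : ∀ ε > (0:ℝ), (1 - (ripConst Φ K + ε)) * A ≤ S ∧ S ≤ (1 + (ripConst Φ K + ε)) * A := by
    intro ε hε
    obtain ⟨d, hd, hdlt⟩ := Real.lt_sInf_add_pos hne hε
    exact isRIP_mono Φ hd.2 hdlt.le I hI q
  rcases eq_or_lt_of_le hA0 with hA0' | hA0'
  · obtain ⟨d, hd⟩ := hne
    obtain ⟨_, h2⟩ := isRIP_mono Φ hd.2 le_rfl I hI q
    have h2' : S ≤ (1 + d) * A := h2
    have : S = 0 := le_antisymm (by rw [← hA0', mul_zero] at h2'; linarith) hS0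
    rw [← hA0', this]
    simp
  · constructor
    · have : ∀ ε > (0:ℝ), (1 - ripConst Φ K) * A ≤ S + ε := by
        intro ε hε
        have := (key (ε / A) (by positivity)).1
        have hh : (1 - (ripConst Φ K + ε / A)) * A = (1 - ripConst Φ K) * A - ε := by
          field_simp
          ring
        linarith [hh ▸ this]
      linarith [le_of_forall_pos_le_add this]
    · have : ∀ ε > (0:ℝ), S ≤ (1 + ripConst Φ K) * A + ε := by
        intro ε hε
        have := (key (ε / A) (by positivity)).2
        have hh : (1 + (ripConst Φ K + ε / A)) * A = (1 + ripConst Φ K) * A + ε := by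
          field_simp
          ring
        linarith [hh ▸ this]
      exact le_of_forall_pos_le_add this

lemma abs_sum_mul_le {α : Type*} [Fintype α] (f g : α → ℝ) :
    |∑ r, f r * g r| ≤ Real.sqrt (∑ r, f r ^ 2) * Real.sqrt (∑ r, g r ^ 2) := by
  have h := Finset.sum_mul_sq_le_sq_mul_sq Finset.univ f g
  have h2 := Real.sqrt_le_sqrt h
  rwa [Real.sqrt_sq_eq_abs, Real.sqrt_mul (by positivity)] at h2

set_option maxHeartbeats 1000000 in
lemma cross_bound {K3 : ℕ} {δ : ℝ} (hR : IsRIP Φ K3 δ) {I J : Finset (Fin N)}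
    (hd : Disjoint I J) (hc : I.card + J.card ≤ K3)
    {v w : Fin N → ℝ} (hv : ∀ j, j ∉ I → v j = 0) (hw : ∀ j, j ∉ J → w j = 0) :
    |∑ r, Φ.mulVec v r * Φ.mulVec w r| ≤
      δ * Real.sqrt (∑ j, v j ^ 2) * Real.sqrt (∑ j, w j ^ 2) := by
  set A := ∑ j, v j ^ 2 with hA
  set B := ∑ j, w j ^ 2 with hB
  have hA0 : 0 ≤ A := Finset.sum_nonneg fun j _ => sq_nonneg _
  have hB0 : 0 ≤ B := Finset.sum_nonneg fun j _ => sq_nonneg _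
  rcases eq_or_lt_of_le hA0 with hA' | hA'
  · have hv0 : ∀ j, v j = 0 := by
      intro j
      have := (Finset.sum_eq_zero_iff_of_nonneg (fun j _ => sq_nonneg (v j))).mp hA'.symm
      exact pow_eq_zero_iff (n := 2) (by norm_num) |>.mp (this j (Finset.mem_univ j))
    have : Φ.mulVec v = 0 := by
      funext r; simp [Matrix.mulVec, dotProduct]
      exact Finset.sum_eq_zero fun j _ => by rw [hv0 j, mul_zero]
    simp [this, ← hA', Real.sqrt_zero]
  rcases eq_or_lt_of_le hB0 with hB' | hB'
  · have hw0 : ∀ j, w j = 0 := by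
      intro j
      have := (Finset.sum_eq_zero_iff_of_nonneg (fun j _ => sq_nonneg (w j))).mp hB'.symm
      exact pow_eq_zero_iff (n := 2) (by norm_num) |>.mp (this j (Finset.mem_univ j))
    have : Φ.mulVec w = 0 := by
      funext r; simp [Matrix.mulVec, dotProduct]
      exact Finset.sum_eq_zero fun j _ => by rw [hw0 j, mul_zero]
    simp [this, ← hB', Real.sqrt_zero]
  · set a := Real.sqrt A with ha
    set b := Real.sqrt B with hb
    have ha2 : a ^ 2 = A := Real.sq_sqrt hA0
    have hb2 : b ^ 2 = B := Real.sq_sqrt hB0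
    have ha0 : 0 < a := Real.sqrt_pos.mpr hA'
    have hb0 : 0 < b := Real.sqrt_pos.mpr hB'
    have hvw : ∀ j, v j * w j = 0 := by
      intro j
      by_cases h : j ∈ I
      · rw [hw j (Finset.disjoint_left.mp hd h), mul_zero]
      · rw [hv j h, zero_mul]
    set s : Fin N → ℝ := b • v + a • w with hs
    set d : Fin N → ℝ := b • v - a • w with hd'
    have hsupps : ∀ j, j ∉ I ∪ J → s j = 0 := by
      intro j hj
      rw [Finset.mem_union] at hj; push_neg at hj
      simp [hs, hv j hj.1, hw j hj.2]
    have hsuppd : ∀ j, j ∉ I ∪ J → d j = 0 := by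
      intro j hj
      rw [Finset.mem_union] at hj; push_neg at hj
      simp [hd', hv j hj.1, hw j hj.2]
    have hcard : (I ∪ J).card ≤ K3 := le_trans (Finset.card_union_le I J) hc
    have hsum_s : ∑ j, s j ^ 2 = 2 * (A * B) := by
      have : ∀ j, s j ^ 2 = b ^ 2 * v j ^ 2 + a ^ 2 * w j ^ 2 + 2 * a * b * (v j * w j) := by
        intro j; simp [hs]; ring
      calc ∑ j, s j ^ 2 = ∑ j, (b ^ 2 * v j ^ 2 + a ^ 2 * w j ^ 2) := by
            refine Finset.sum_congr rfl fun j _ => ?_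
            rw [this j, hvw j]; ring
        _ = b ^ 2 * A + a ^ 2 * B := by
            rw [Finset.sum_add_distrib, ← Finset.mul_sum, ← Finset.mul_sum]
        _ = 2 * (A * B) := by rw [ha2, hb2]; ring
    have hsum_d : ∑ j, d j ^ 2 = 2 * (A * B) := by
      have : ∀ j, d j ^ 2 = b ^ 2 * v j ^ 2 + a ^ 2 * w j ^ 2 - 2 * a * b * (v j * w j) := by
        intro j; simp [hd']; ring
      calc ∑ j, d j ^ 2 = ∑ j, (b ^ 2 * v j ^ 2 + a ^ 2 * w j ^ 2) := by
            refine Finset.sum_congr rfl fun j _ => ?_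
            rw [this j, hvw j]; ring
        _ = b ^ 2 * A + a ^ 2 * B := by
            rw [Finset.sum_add_distrib, ← Finset.mul_sum, ← Finset.mul_sum]
        _ = 2 * (A * B) := by rw [ha2, hb2]; ring
    set P := Φ.mulVec v with hP
    set Q := Φ.mulVec w with hQ
    set C := ∑ r, P r * Q r with hC
    have hms : Φ.mulVec s = b • P + a • Q := by
      rw [hs, Matrix.mulVec_add, Matrix.mulVec_smul, Matrix.mulVec_smul]
    have hmd : Φ.mulVec d = b • P - a • Q := by
      rw [hd', Matrix.mulVec_sub, Matrix.mulVec_smul, Matrix.mulVec_smul]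
    have hes : ∑ r, (Φ.mulVec s r) ^ 2 =
        b ^ 2 * ∑ r, P r ^ 2 + a ^ 2 * ∑ r, Q r ^ 2 + 2 * a * b * C := by
      simp only [hms, Pi.add_apply, Pi.smul_apply, smul_eq_mul]
      rw [hC, Finset.mul_sum, Finset.mul_sum, Finset.mul_sum]
      rw [← Finset.sum_add_distrib, ← Finset.sum_add_distrib]
      exact Finset.sum_congr rfl fun r _ => by ring
    have hed : ∑ r, (Φ.mulVec d r) ^ 2 =
        b ^ 2 * ∑ r, P r ^ 2 + a ^ 2 * ∑ r, Q r ^ 2 - 2 * a * b * C := by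
      simp only [hmd, Pi.sub_apply, Pi.smul_apply, smul_eq_mul]
      rw [hC, Finset.mul_sum, Finset.mul_sum, Finset.mul_sum]
      rw [← Finset.sum_add_distrib, ← Finset.sum_sub_distrib]
      exact Finset.sum_congr rfl fun r _ => by ring
    have h1 := (rip_vec Φ hR hcard hsupps).2
    have h2 := (rip_vec Φ hR hcard hsuppd).1
    have h3 := (rip_vec Φ hR hcard hsuppd).2
    have h4 := (rip_vec Φ hR hcard hsupps).1
    rw [hsum_s, hes] at h1 h4
    rw [hsum_d, hed] at h2 h3
    have hab : 0 < a * b := mul_pos ha0 hb0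
    have hab2 : A * B = (a * b) * (a * b) := by rw [← ha2, ← hb2]; ring
    have hup : 4 * (a * b) * C ≤ 4 * δ * (A * B) := by linarith
    have hlow : -(4 * (a * b) * C) ≤ 4 * δ * (A * B) := by linarith
    rw [hab2] at hup hlow
    rw [abs_le]
    constructor
    · apply le_of_mul_le_mul_right _ (by positivity : (0:ℝ) < 4 * (a * b))
      nlinarith [hlow]
    · apply le_of_mul_le_mul_right _ (by positivity : (0:ℝ) < 4 * (a * b))
      nlinarith [hup]

lemma dot_colTMul {I : Finset (Fin N)} (q : I → ℝ) (y : Fin m → ℝ) :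
    ∑ i : I, q i * colTMul Φ I y i = ∑ r, colMul Φ I q r * y r := by
  calc ∑ i : I, q i * colTMul Φ I y i
      = ∑ i : I, ∑ r, q i * (Φ r i.1 * y r) := by
        refine Finset.sum_congr rfl fun i _ => ?_
        rw [colTMul, Finset.mul_sum]
    _ = ∑ r, ∑ i : I, q i * (Φ r i.1 * y r) := Finset.sum_comm
    _ = ∑ r, colMul Φ I q r * y r := by
        refine Finset.sum_congr rfl fun r _ => ?_
        rw [colMul, Finset.sum_mul]
        exact Finset.sum_congr rfl fun i _ => by ring

lemma gram_mulVec {I : Finset (Fin N)} (q : I → ℝ) :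
    (gram Φ I).mulVec q = colTMul Φ I (colMul Φ I q) := by
  funext i
  calc (gram Φ I).mulVec q i = ∑ j : I, (∑ r, Φ r i.1 * Φ r j.1) * q j := rfl
    _ = ∑ j : I, ∑ r, Φ r i.1 * Φ r j.1 * q j := by
        refine Finset.sum_congr rfl fun j _ => ?_
        rw [Finset.sum_mul]
    _ = ∑ r, ∑ j : I, Φ r i.1 * Φ r j.1 * q j := Finset.sum_comm
    _ = colTMul Φ I (colMul Φ I q) i := by
        rw [colTMul]
        refine Finset.sum_congr rfl fun r _ => ?_
        rw [colMul, Finset.mul_sum]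
        exact Finset.sum_congr rfl fun j _ => by ring

lemma gram_projCoeff {I : Finset (Fin N)} (hg : IsUnit (gram Φ I)) (y : Fin m → ℝ) :
    (gram Φ I).mulVec (projCoeff Φ I y) = colTMul Φ I y := by
  rw [projCoeff, Matrix.mulVec_mulVec,
    Matrix.mul_nonsing_inv _ ((Matrix.isUnit_iff_isUnit_det _).mp hg), Matrix.one_mulVec]

lemma colTMul_sub {I : Finset (Fin N)} (y1 y2 : Fin m → ℝ) :
    colTMul Φ I (y1 - y2) = colTMul Φ I y1 - colTMul Φ I y2 := by
  funext i
  simp [colTMul, mul_sub, Finset.sum_sub_distrib]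

end aux

set_option maxHeartbeats 2000000 in
theorem recovery_error_bound {m N : ℕ} (Φ : Matrix (Fin m) (Fin N) ℝ) (K : ℕ)
    (x : Fin N → ℝ) (e : Fin m → ℝ) (T That : Finset (Fin N))
    (hsupp : ∀ i, i ∉ T → x i = 0) (hT : T.card ≤ K)
    (hThat : That.card ≤ K) (hg : IsUnit (gram Φ That))
    (hδ : ripConst Φ (3 * K) < 1) :
    l2norm (fun i => x i -
        (if h : i ∈ That then projCoeff Φ That (Φ.mulVec x + e) ⟨i, h⟩ else 0)) ≤
      1 / (1 - ripConst Φ (3 * K)) *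
          l2norm (fun i : (T \ That : Finset (Fin N)) => x i.1) +
        (1 + ripConst Φ (3 * K)) / (1 - ripConst Φ (3 * K)) * l2norm e := by
  set δ := ripConst Φ (3 * K) with hδdef
  have hδ0 : 0 ≤ δ := ripConst_nonneg Φ (3 * K)
  have hR : IsRIP Φ (3 * K) δ := isRIP_ripConst Φ (3 * K)
  have h1δ : 0 < 1 - δ := by linarith
  set c : That → ℝ := projCoeff Φ That (Φ.mulVec x + e) with hc
  set z : Fin N → ℝ := fun j => if j ∈ That then 0 else x j with hz
  set xI : Fin N → ℝ := fun j => if j ∈ That then x j else 0 with hxI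
  have hxsplit : x = xI + z := by
    funext j; by_cases h : j ∈ That <;> simp [hxI, hz, h]
  set hq : That → ℝ := fun i => x i.1 - c i with hhq
  set Hv : Fin N → ℝ := extv That hq with hHv
  have hgoalvec : (fun j => x j - (if h : j ∈ That then c ⟨j, h⟩ else 0))
      = fun j => Hv j + z j := by
    funext j
    by_cases h : j ∈ That <;> simp [hHv, extv, h, hz, hhq]
  set H := ∑ j, Hv j ^ 2 with hHdef
  set Z := ∑ j, z j ^ 2 with hZdef
  set E := ∑ r, e r ^ 2 with hEdef
  have hH0 : 0 ≤ H := Finset.sum_nonneg fun j _ => sq_nonneg _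
  have hZ0 : 0 ≤ Z := Finset.sum_nonneg fun j _ => sq_nonneg _
  have hE0 : 0 ≤ E := Finset.sum_nonneg fun r _ => sq_nonneg _
  have hsupHv : ∀ j, j ∉ That → Hv j = 0 := fun j hj => extv_not_mem hq hj
  have hsupz : ∀ j, j ∉ T \ That → z j = 0 := by
    intro j hj
    by_cases h : j ∈ That
    · simp [hz, h]
    · have hjT : j ∉ T := fun hT' => hj (Finset.mem_sdiff.mpr ⟨hT', h⟩)
      simp [hz, h, hsupp j hjT]
  -- Gram relation
  have hgram_c : (gram Φ That).mulVec c = colTMul Φ That (Φ.mulVec x + e) :=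
    gram_projCoeff Φ hg _
  have hcolx : colMul Φ That (fun i : That => x i.1) = Φ.mulVec xI := by
    rw [colMul_eq_mulVec]
    have hx2 : extv That (fun i : That => x i.1) = xI := by
      funext j
      by_cases h : j ∈ That <;> simp [extv, h, hxI]
    rw [hx2]
  have hgram_h : (gram Φ That).mulVec hq
      = colTMul Φ That (Φ.mulVec xI - (Φ.mulVec x + e)) := by
    have : hq = (fun i : That => x i.1) - c := rfl
    rw [this, Matrix.mulVec_sub, hgram_c, gram_mulVec, hcolx, colTMul_sub]
  have hdiff : Φ.mulVec xI - (Φ.mulVec x + e) = -(Φ.mulVec z + e) := by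
    rw [hxsplit, Matrix.mulVec_add]
    funext r
    simp only [Pi.sub_apply, Pi.add_apply, Pi.neg_apply]
    ring
  have hPhiH : colMul Φ That hq = Φ.mulVec Hv := colMul_eq_mulVec Φ hq
  -- energy identity
  have hD1 : ∑ i : That, hq i * (gram Φ That).mulVec hq i = ∑ r, (Φ.mulVec Hv r) ^ 2 := by
    rw [gram_mulVec, dot_colTMul, hPhiH]
    exact Finset.sum_congr rfl fun r _ => by ring
  have hD2 : ∑ i : That, hq i * (gram Φ That).mulVec hq i
      = -(∑ r, Φ.mulVec Hv r * Φ.mulVec z r) - ∑ r, Φ.mulVec Hv r * e r := by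
    rw [hgram_h, hdiff, dot_colTMul, hPhiH]
    rw [← Finset.sum_neg_distrib, ← Finset.sum_sub_distrib]
    refine Finset.sum_congr rfl fun r _ => ?_
    simp only [Pi.neg_apply, Pi.add_apply]
    ring
  -- RIP bounds
  have hIcard : That.card ≤ 3 * K := le_trans hThat (by omega)
  have hHsum : ∑ i : That, hq i ^ 2 = H := by rw [hHdef, hHv, ← sumsq_extv]
  have hrip_low : (1 - δ) * H ≤ ∑ r, (Φ.mulVec Hv r) ^ 2 :=
    (rip_vec Φ hR hIcard hsupHv).1
  have hrip_up : ∑ r, (Φ.mulVec Hv r) ^ 2 ≤ (1 + δ) * H :=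
    (rip_vec Φ hR hIcard hsupHv).2
  have hdisj : Disjoint That (T \ That) := Finset.disjoint_sdiff
  have hcards : That.card + (T \ That).card ≤ 3 * K := by
    have := Finset.card_le_card (Finset.sdiff_subset (s := T) (t := That))
    omega
  have hcross : |∑ r, Φ.mulVec Hv r * Φ.mulVec z r| ≤ δ * Real.sqrt H * Real.sqrt Z :=
    cross_bound Φ hR hdisj hcards hsupHv hsupz
  have hCS : |∑ r, Φ.mulVec Hv r * e r|
      ≤ Real.sqrt (∑ r, (Φ.mulVec Hv r) ^ 2) * Real.sqrt E :=
    abs_sum_mul_le _ e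
  have hPhiHnorm : Real.sqrt (∑ r, (Φ.mulVec Hv r) ^ 2)
      ≤ Real.sqrt (1 + δ) * Real.sqrt H := by
    rw [← Real.sqrt_mul (by linarith : (0:ℝ) ≤ 1 + δ)]
    exact Real.sqrt_le_sqrt hrip_up
  set sH := Real.sqrt H with hsH
  set sZ := Real.sqrt Z with hsZ
  set sE := Real.sqrt E with hsE
  set t := Real.sqrt (1 + δ) with ht
  have hsH0 : 0 ≤ sH := Real.sqrt_nonneg _
  have hsZ0 : 0 ≤ sZ := Real.sqrt_nonneg _
  have hsE0 : 0 ≤ sE := Real.sqrt_nonneg _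
  have ht0 : 0 ≤ t := Real.sqrt_nonneg _
  have hsH2 : sH ^ 2 = H := Real.sq_sqrt hH0
  have hsZ2 : sZ ^ 2 = Z := Real.sq_sqrt hZ0
  have hsE2 : sE ^ 2 = E := Real.sq_sqrt hE0
  have ht2 : t ^ 2 = 1 + δ := Real.sq_sqrt (by linarith)
  have htle : t ≤ 1 + δ := by nlinarith [ht2, ht0]
  -- main scalar inequality
  have hmain : (1 - δ) * H ≤ δ * sH * sZ + t * sH * sE := by
    have h1 : (1 - δ) * H ≤ -(∑ r, Φ.mulVec Hv r * Φ.mulVec z r)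
        - ∑ r, Φ.mulVec Hv r * e r := by rw [← hD2, hD1]; exact hrip_low
    have h2 : -(∑ r, Φ.mulVec Hv r * Φ.mulVec z r) ≤ δ * sH * sZ :=
      le_trans (neg_le_abs _) hcross
    have h3 : -(∑ r, Φ.mulVec Hv r * e r) ≤ t * sH * sE :=
      le_trans (neg_le_abs _) (le_trans hCS (mul_le_mul_of_nonneg_right hPhiHnorm hsE0))
    linarith
  have hstep : (1 - δ) * sH ≤ δ * sZ + t * sE := by
    rcases eq_or_lt_of_le hsH0 with h | h
    · rw [← h]
      have : 0 ≤ δ * sZ + t * sE := by positivity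
      linarith
    · have : (1 - δ) * sH * sH ≤ (δ * sZ + t * sE) * sH := by nlinarith [hmain, hsH2]
      exact le_of_mul_le_mul_right this h
  -- rewrite goal
  rw [hgoalvec]
  have hzero : ∀ j, Hv j * z j = 0 := by
    intro j
    by_cases h : j ∈ That
    · simp [hz, h]
    · rw [hsupHv j h, zero_mul]
  have hsum_split : ∑ j, (Hv j + z j) ^ 2 = H + Z := by
    calc ∑ j, (Hv j + z j) ^ 2 = ∑ j, (Hv j ^ 2 + z j ^ 2) := by
          refine Finset.sum_congr rfl fun j _ => ?_
          have := hzero j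
          nlinarith [this]
      _ = H + Z := by rw [Finset.sum_add_distrib]
  have hZeq : ∑ i : (T \ That : Finset (Fin N)), (x i.1) ^ 2 = Z := by
    rw [Finset.sum_coe_sort (T \ That) (fun j => x j ^ 2)]
    rw [hZdef]
    rw [← Finset.sum_subset (Finset.subset_univ (T \ That))
      (fun j _ hj => by rw [hsupz j hj]; ring)]
    refine Finset.sum_congr rfl fun j hj => ?_
    have hjI : j ∉ That := (Finset.mem_sdiff.mp hj).2
    simp [hz, hjI]
  have hLHS : l2norm (fun j => Hv j + z j) = Real.sqrt (H + Z) := by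
    rw [l2norm, hsum_split]
  have hRHS1 : l2norm (fun i : (T \ That : Finset (Fin N)) => x i.1) = sZ := by
    rw [l2norm, hZeq]
  have hRHS2 : l2norm e = sE := rfl
  rw [hLHS, hRHS1, hRHS2]
  have hsqrt_add : Real.sqrt (H + Z) ≤ sH + sZ := by
    have h1 : H + Z ≤ (sH + sZ) ^ 2 := by nlinarith [hsH2, hsZ2, hsH0, hsZ0]
    calc Real.sqrt (H + Z) ≤ Real.sqrt ((sH + sZ) ^ 2) := Real.sqrt_le_sqrt h1
      _ = sH + sZ := Real.sqrt_sq (by positivity)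
  have hfinal : sH + sZ ≤ 1 / (1 - δ) * sZ + (1 + δ) / (1 - δ) * sE := by
    rw [div_mul_eq_mul_div, div_mul_eq_mul_div, ← add_div, le_div_iff₀ h1δ]
    nlinarith [hstep, mul_le_mul_of_nonneg_right htle hsE0]
  linarith
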